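/- With the ALSA-neighbor relation (subsets S, U of size m are neighbors iff |S∩U| = m−1 and the exchanged element of S is its u-argmin or g-argmin, or the exchanged element of U is its u-argmin or g-argmin), the resulting graph on all m-element subsets of {1,...,K} is connected: from any state s₀ there exists a path to any fixed target state s*. -/

import Mathlib

open Finset

/-- `a` is the minimizer of `f` on the finite set `S`. -/
def IsArgminOn {ι : Type*} (f : ι → ℝ) (S : Finset ι) (a : ι) : Prop :=
  a ∈ S ∧ ∀ b ∈ S, f a ≤ f b

/-- The ALSA neighborhood relation restricted to `m`-element subsets. -/
def AlsaStep {ι : Type*} [DecidableEq ι] (u g : ι → ℝ) (m : ℕ)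
    (S U : Finset ι) : Prop :=
  S.card = m ∧ U.card = m ∧ (S ∩ U).card = m - 1 ∧
  ((∀ x ∈ S \ U, IsArgminOn u S x ∨ IsArgminOn g S x) ∨
   (∀ y ∈ U \ S, IsArgminOn u U y ∨ IsArgminOn g U y))

lemma alsaStep_symm {ι : Type*} [DecidableEq ι] (u g : ι → ℝ) (m : ℕ) :
    Symmetric (AlsaStep u g m) := by
  rintro S U ⟨hS, hU, hI, h⟩
  exact ⟨hU, hS, by rwa [inter_comm], h.symm⟩

lemma exists_top (K : ℕ) (u : Fin K → ℝ) (hu : Function.Injective u) :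
    ∀ n, n ≤ K → ∃ T : Finset (Fin K), T.card = n ∧ ∀ a ∈ T, ∀ b ∉ T, u b < u a := by
  intro n
  induction n with
  | zero => exact fun _ => ⟨∅, rfl, by simp⟩
  | succ n ih =>
    intro hn
    obtain ⟨T, hcard, hdom⟩ := ih (Nat.le_of_succ_le hn)
    have hne : Tᶜ.Nonempty := by
      rw [← card_pos, card_compl, Fintype.card_fin, hcard]
      omega
    obtain ⟨a, ha, hmax⟩ := Tᶜ.exists_max_image u hne
    have haT : a ∉ T := by simpa using ha
    refine ⟨insert a T, ?_, ?_⟩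
    · rw [card_insert_of_notMem haT, hcard]
    · intro x hx b hb
      simp only [mem_insert] at hx hb
      push_neg at hb
      rcases hx with rfl | hx
      · have hbc : b ∈ Tᶜ := by simpa using hb.2
        exact lt_of_le_of_ne (hmax b hbc) (fun h => hb.1 (hu h))
      · exact hdom x hx b hb.2

lemma reach_top (K m : ℕ) (hm : 1 ≤ m) (u g : Fin K → ℝ) (hu : Function.Injective u)
    (T : Finset (Fin K)) (hT : T.card = m)
    (hdom : ∀ a ∈ T, ∀ b ∉ T, u b < u a) :
    ∀ S : Finset (Fin K), S.card = m → Relation.ReflTransGen (AlsaStep u g m) S T := by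
  suffices h : ∀ n S, S.card = m → (T \ S).card = n →
      Relation.ReflTransGen (AlsaStep u g m) S T from fun S hS => h _ S hS rfl
  intro n
  induction n using Nat.strong_induction_on with
  | _ n ih =>
    intro S hS hn
    by_cases hST : S = T
    · subst hST; exact .refl
    -- S is nonempty; take its u-argmin x
    have hSne : S.Nonempty := by
      rw [← card_pos, hS]; omega
    obtain ⟨x, hxS, hxmin⟩ := S.exists_min_image u hSne
    -- x is not in T
    have hxT : x ∉ T := by
      intro hxT
      apply hST
      apply Finset.eq_of_subset_of_card_le _ (by rw [hT, hS])
      intro s hs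
      by_contra hsT
      have h1 := hdom x hxT s hsT
      have h2 := hxmin s hs
      linarith
    -- pick t ∈ T \ S
    have hTS : (T \ S).Nonempty := by
      rw [← card_pos]
      by_contra hc
      push_neg at hc
      have : T ⊆ S := by
        intro a haT
        by_contra haS
        have : a ∈ T \ S := mem_sdiff.mpr ⟨haT, haS⟩
        have := card_pos.mpr ⟨a, this⟩
        omega
      exact hST (Finset.eq_of_subset_of_card_le this (by rw [hT, hS])).symm
    obtain ⟨t, ht⟩ := hTS
    have htT : t ∈ T := (mem_sdiff.mp ht).1
    have htS : t ∉ S := (mem_sdiff.mp ht).2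
    set U : Finset (Fin K) := insert t (S.erase x) with hU
    have htU : t ∉ S.erase x := fun h => htS (mem_of_mem_erase h)
    have hUcard : U.card = m := by
      rw [hU, card_insert_of_notMem htU, card_erase_of_mem hxS, hS]
      omega
    have hSU : S ∩ U = S.erase x := by
      ext a
      simp only [hU, mem_inter, mem_insert, mem_erase]
      constructor
      · rintro ⟨haS, (rfl | ⟨hax, _⟩)⟩
        · exact absurd haS htS
        · exact ⟨hax, haS⟩
      · rintro ⟨hax, haS⟩
        exact ⟨haS, Or.inr ⟨hax, haS⟩⟩
    have hstep : AlsaStep u g m S U := by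
      refine ⟨hS, hUcard, ?_, Or.inl ?_⟩
      · rw [hSU, card_erase_of_mem hxS, hS]
      · intro y hy
        have hyx : y = x := by
          rcases mem_sdiff.mp hy with ⟨hyS, hyU⟩
          simp only [hU, mem_insert, mem_erase, not_or, not_and] at hyU
          by_contra hne
          exact hyU.2 hne hyS
        subst hyx
        exact Or.inl ⟨hxS, hxmin⟩
    -- measure decreases
    have hTU : T \ U = (T \ S).erase t := by
      ext a
      simp only [hU, mem_sdiff, mem_erase, mem_insert, not_or, not_and]
      constructor
      · rintro ⟨haT, hat, h2⟩
        refine ⟨hat, haT, ?_⟩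
        intro haS
        have hax : a ≠ x := fun h => hxT (h ▸ haT)
        exact h2 hax haS
      · rintro ⟨hat, haT, haS⟩
        exact ⟨haT, hat, fun _ h => haS h⟩
    have hnpos : 0 < n := by
      rw [← hn]
      exact card_pos.mpr ⟨t, ht⟩
    have hlt : (T \ U).card = n - 1 := by
      rw [hTU, card_erase_of_mem ht, hn]
    exact Relation.ReflTransGen.head hstep (ih (n - 1) (by omega) U hUcard hlt)

theorem alsa_graph_connected
    (K m : ℕ) (hm : 1 ≤ m) (hK : m ≤ K)
    (u g : Fin K → ℝ) (hu : Function.Injective u) (hg : Function.Injective g)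
    (s₀ sStar : Finset (Fin K)) (h₀ : s₀.card = m) (hStar : sStar.card = m) :
    Relation.ReflTransGen (AlsaStep u g m) s₀ sStar := by
  obtain ⟨T, hT, hdom⟩ := exists_top K u hu m hK
  have p1 := reach_top K m hm u g hu T hT hdom s₀ h₀
  have p2 := reach_top K m hm u g hu T hT hdom sStar hStar
  have p2' : Relation.ReflTransGen (AlsaStep u g m) T sStar :=
    (@Relation.ReflTransGen.stdSymm _ _ ⟨alsaStep_symm u g m⟩).symm _ _ p2
  exact p1.trans p2'
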